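/- arXiv:0907.4422 — 2 statements merged into one kernel-verified Lean document; each statement's English description precedes it below -/
import Mathlib

section
/- Let A be a differential ring, X = Spec^Δ A, and O' the sheaf on X whose sections over an open U are functions f assigning to each p ∈ U an element of the residue field K(p) = Frac(A/p), such that f is locally of the form a/b with a, b ∈ A and b ∉ q for all q in the neighborhood. Then for every η ∈ O'(X) there exist a_1, …, a_m, b_1, …, b_m ∈ A such that b_i·η = ι'(a_i) for each i (where ι' : A → O'(X) is the canonical map) and the smallest radical differential ideal of A containing {b_1, …, b_m} is all of A. -/
/-- An ideal is a differential ideal w.r.t. a family of derivation maps `d`. -/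
def IsDiffIdeal {A : Type*} [CommRing A] {k : ℕ} (d : Fin k → A → A) (I : Ideal A) : Prop :=
  ∀ i : Fin k, ∀ x ∈ I, d i x ∈ I

/-- The differential spectrum: prime differential ideals, with the Kolchin topology
(the subspace topology induced from the Zariski topology on `PrimeSpectrum`). -/
abbrev DiffSpec {A : Type*} [CommRing A] {k : ℕ} (d : Fin k → A → A) :=
  {p : PrimeSpectrum A // IsDiffIdeal d p.asIdeal}

/-- A Keigher ring: the radical of every differential ideal is differential. -/
def IsKeigher {A : Type*} [CommRing A] {k : ℕ} (d : Fin k → A → A) : Prop :=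
  ∀ I : Ideal A, IsDiffIdeal d I → IsDiffIdeal d I.radical

/-- `radDiffGen d E` is the smallest radical differential ideal containing `E`. -/
def radDiffGen {A : Type*} [CommRing A] {k : ℕ} (d : Fin k → A → A) (E : Set A) : Ideal A :=
  sInf {I : Ideal A | E ⊆ I ∧ I.IsRadical ∧ IsDiffIdeal d I}

/-- The canonical map from `A` to the residue field `K(p) = Frac(A/p)`. -/
noncomputable def resMap {A : Type*} [CommRing A] {k : ℕ} {d : Fin k → A → A}
    (p : DiffSpec d) : A →+* FractionRing (A ⧸ p.1.asIdeal) :=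
  (algebraMap (A ⧸ p.1.asIdeal) (FractionRing (A ⧸ p.1.asIdeal))).comp
    (Ideal.Quotient.mk p.1.asIdeal)

/-- A function `X → ⊔_p K(p)` is regular if it is locally a quotient `a/b` with `b`
outside every prime differential ideal of the neighborhood. -/
def RegularRes {A : Type*} [CommRing A] {k : ℕ} {d : Fin k → A → A}
    (f : ∀ p : DiffSpec d, FractionRing (A ⧸ p.1.asIdeal)) : Prop :=
  ∀ p : DiffSpec d, ∃ U : Set (DiffSpec d), IsOpen U ∧ p ∈ U ∧ ∃ a b : A,
    (∀ q ∈ U, b ∉ q.1.asIdeal) ∧ ∀ q ∈ U, f q * resMap q b = resMap q a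

section Aux

variable {A : Type*} [CommRing A] {k : ℕ} (δ : Fin k → Derivation ℤ A A)

/-- Key lemma: in a radical differential ideal, `a*b ∈ I → a * δ b ∈ I`. -/
theorem key_diff_lemma {I : Ideal A} (hrad : I.IsRadical)
    (hdiff : IsDiffIdeal (fun i => ⇑(δ i)) I)
    {a b : A} (hab : a * b ∈ I) (i : Fin k) : a * δ i b ∈ I := by
  have h1 : (δ i) (a * b) ∈ I := hdiff i _ hab
  have hleib : (δ i) (a * b) = a * δ i b + b * δ i a := by
    rw [(δ i).leibniz]; simp [smul_eq_mul]
  have : (a * δ i b) ^ 2 ∈ I := by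
    have hsq : (a * δ i b) ^ 2 = (a * δ i b) * ((δ i) (a * b)) - (a * b) * (δ i a * δ i b) := by
      rw [hleib]; ring
    rw [hsq]
    exact sub_mem (I.mul_mem_left _ h1) (I.mul_mem_right _ hab)
  exact hrad ⟨2, this⟩

/-- The "colon" ideal `{x | x * t ∈ I}`. -/
def colonI (I : Ideal A) (t : A) : Ideal A where
  carrier := {x | x * t ∈ I}
  zero_mem' := by simp
  add_mem' := by
    intro x y hx hy
    simpa [add_mul] using add_mem hx hy
  smul_mem' := by
    intro c x hx
    simpa [smul_eq_mul, mul_assoc] using I.mul_mem_left c hx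

theorem colonI_isRadical {I : Ideal A} (hrad : I.IsRadical) (t : A) :
    (colonI I t).IsRadical := by
  rintro x ⟨n, hn⟩
  rcases Nat.eq_zero_or_pos n with rfl | hpos
  · simp only [pow_zero] at hn
    exact I.mul_mem_left x (by simpa [colonI] using hn)
  · obtain ⟨m, rfl⟩ : ∃ m, n = m + 1 := ⟨n - 1, (Nat.succ_pred_eq_of_pos hpos).symm⟩
    have hxt : (x * t) ^ (m + 1) ∈ I := by
      have he : (x * t) ^ (m + 1) = (x ^ (m + 1) * t) * t ^ m := by
        rw [mul_pow, pow_succ]; ring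
      rw [he]
      exact I.mul_mem_right _ hn
    exact hrad ⟨m + 1, hxt⟩

theorem colonI_isDiff {I : Ideal A} (hrad : I.IsRadical)
    (hdiff : IsDiffIdeal (fun i => ⇑(δ i)) I) (t : A) :
    IsDiffIdeal (fun i => ⇑(δ i)) (colonI I t) := by
  intro i x hx
  have hxt : t * x ∈ I := by rwa [mul_comm]
  have := key_diff_lemma δ hrad hdiff hxt i
  show (δ i x) * t ∈ I
  rwa [mul_comm]

theorem subset_radDiffGen (E : Set A) : E ⊆ ↑(radDiffGen (fun i => ⇑(δ i)) E) := by
  intro x hx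
  rw [radDiffGen]
  exact Submodule.mem_sInf.2 fun I hI => hI.1 hx

theorem radDiffGen_le {E : Set A} {I : Ideal A} (hE : E ⊆ I) (hrad : I.IsRadical)
    (hdiff : IsDiffIdeal (fun i => ⇑(δ i)) I) : radDiffGen (fun i => ⇑(δ i)) E ≤ I :=
  sInf_le ⟨hE, hrad, hdiff⟩

theorem radDiffGen_isRadical (E : Set A) : (radDiffGen (fun i => ⇑(δ i)) E).IsRadical := by
  rintro x ⟨n, hn⟩
  rw [radDiffGen] at *
  refine Submodule.mem_sInf.2 fun I hI => ?_
  exact hI.2.1 ⟨n, Submodule.mem_sInf.1 hn I hI⟩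

theorem radDiffGen_isDiff (E : Set A) :
    IsDiffIdeal (fun i => ⇑(δ i)) (radDiffGen (fun i => ⇑(δ i)) E) := by
  intro i x hx
  rw [radDiffGen] at *
  exact Submodule.mem_sInf.2 fun I hI => hI.2.2 i x (Submodule.mem_sInf.1 hx I hI)

theorem radDiffGen_mono {E F : Set A} (h : E ⊆ F) :
    radDiffGen (fun i => ⇑(δ i)) E ≤ radDiffGen (fun i => ⇑(δ i)) F :=
  radDiffGen_le δ (h.trans (subset_radDiffGen δ F)) (radDiffGen_isRadical δ F)
    (radDiffGen_isDiff δ F)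

/-- Multiplicativity lemma: `{M,a}·{M,b} ⊆ M` when `ab ∈ M`. -/
theorem mul_lemma {M : Ideal A} (hrad : M.IsRadical) (hdiff : IsDiffIdeal (fun i => ⇑(δ i)) M)
    {a b : A} (hab : a * b ∈ M) {x y : A}
    (hx : x ∈ radDiffGen (fun i => ⇑(δ i)) (↑M ∪ {a}))
    (hy : y ∈ radDiffGen (fun i => ⇑(δ i)) (↑M ∪ {b})) : x * y ∈ M := by
  have step1 : ∀ t ∈ (↑M ∪ {b} : Set A), x * t ∈ M := by
    intro t ht
    have hsub : (↑M ∪ {a} : Set A) ⊆ ↑(colonI M t) := by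
      rintro z (hz | hz)
      · exact M.mul_mem_right t hz
      · rcases hz with rfl
        rcases ht with htM | htb
        · exact M.mul_mem_left _ htM
        · rcases htb with rfl
          exact hab
    exact radDiffGen_le δ hsub (colonI_isRadical hrad t) (colonI_isDiff δ hrad hdiff t) hx
  have hsub2 : (↑M ∪ {b} : Set A) ⊆ ↑(colonI M x) := by
    intro t ht
    show t * x ∈ M
    rw [mul_comm]; exact step1 t ht
  have := radDiffGen_le δ hsub2 (colonI_isRadical hrad x) (colonI_isDiff δ hrad hdiff x) hy
  have hyx : y * x ∈ M := this
  rwa [mul_comm]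

/-- Every proper radical differential ideal is contained in a prime differential ideal. -/
theorem exists_prime_diff {I : Ideal A} (hrad : I.IsRadical)
    (hdiff : IsDiffIdeal (fun i => ⇑(δ i)) I) (hne : (1 : A) ∉ I) :
    ∃ P : Ideal A, P.IsPrime ∧ IsDiffIdeal (fun i => ⇑(δ i)) P ∧ I ≤ P := by
  set s : Set (Ideal A) :=
    {J | J.IsRadical ∧ IsDiffIdeal (fun i => ⇑(δ i)) J ∧ (1 : A) ∉ J} with hs
  have hub : ∀ c ⊆ s, IsChain (· ≤ ·) c → ∀ y ∈ c, ∃ ub ∈ s, ∀ z ∈ c, z ≤ ub := by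
    intro c hcs hchain y hyc
    refine ⟨sSup c, ?_, fun z hz => le_sSup hz⟩
    rw [hs, Set.mem_setOf_eq]
    refine ⟨?_, ?_, ?_⟩
    · rintro x ⟨n, hn⟩
      obtain ⟨J, hJc, hxJ⟩ := (Submodule.mem_sSup_of_directed ⟨y, hyc⟩
        (hchain.directedOn)).1 hn
      exact le_sSup hJc ((hcs hJc).1 ⟨n, hxJ⟩)
    · intro i x hx
      obtain ⟨J, hJc, hxJ⟩ := (Submodule.mem_sSup_of_directed ⟨y, hyc⟩
        (hchain.directedOn)).1 hx
      exact le_sSup hJc ((hcs hJc).2.1 i x hxJ)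
    · intro h1
      obtain ⟨J, hJc, hxJ⟩ := (Submodule.mem_sSup_of_directed ⟨y, hyc⟩
        (hchain.directedOn)).1 h1
      exact (hcs hJc).2.2 hxJ
  obtain ⟨M, hIM, hmax⟩ := zorn_le_nonempty₀ s hub I ⟨hrad, hdiff, hne⟩
  have hMs : M ∈ s := hmax.1
  have hMmax : ∀ J ∈ s, M ≤ J → J = M := fun J hJ hMJ => le_antisymm (hmax.2 hJ hMJ) hMJ
  obtain ⟨hMrad, hMdiff, hM1⟩ := hMs
  refine ⟨M, ⟨?_, ?_⟩, hMdiff, hIM⟩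
  · intro htop
    exact hM1 (htop ▸ Submodule.mem_top)
  · intro a b hab
    by_contra hcon
    push_neg at hcon
    obtain ⟨ha, hb⟩ := hcon
    have h1mem : ∀ c : A, c ∉ M → (1 : A) ∈ radDiffGen (fun i => ⇑(δ i)) (↑M ∪ {c}) := by
      intro c hc
      by_contra h1
      have hks : radDiffGen (fun i => ⇑(δ i)) (↑M ∪ {c}) ∈ s :=
        ⟨radDiffGen_isRadical δ _, radDiffGen_isDiff δ _, h1⟩
      have hle : M ≤ radDiffGen (fun i => ⇑(δ i)) (↑M ∪ {c}) := fun z hz =>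
        subset_radDiffGen δ _ (Or.inl hz)
      have := hMmax _ hks hle
      exact hc (this ▸ subset_radDiffGen δ (↑M ∪ {c}) (Or.inr rfl))
    have := mul_lemma δ hMrad hMdiff hab (h1mem a ha) (h1mem b hb)
    rw [mul_one] at this
    exact hM1 this

/-- Finitary character of `radDiffGen`. -/
theorem radDiffGen_finitary {B : Set A} (h : (1 : A) ∈ radDiffGen (fun i => ⇑(δ i)) B) :
    ∃ F : Finset A, ↑F ⊆ B ∧ (1 : A) ∈ radDiffGen (fun i => ⇑(δ i)) (↑F : Set A) := by
  set J : Ideal A :=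
    { carrier := {x | ∃ F : Finset A, ↑F ⊆ B ∧ x ∈ radDiffGen (fun i => ⇑(δ i)) (↑F : Set A)}
      zero_mem' := ⟨∅, by simp, zero_mem _⟩
      add_mem' := by
        classical
        rintro x y ⟨F1, hF1, hx⟩ ⟨F2, hF2, hy⟩
        refine ⟨F1 ∪ F2, by rw [Finset.coe_union]; exact Set.union_subset hF1 hF2, ?_⟩
        exact add_mem (radDiffGen_mono δ (by rw [Finset.coe_union]; exact Set.subset_union_left) hx)
          (radDiffGen_mono δ (by rw [Finset.coe_union]; exact Set.subset_union_right) hy)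
      smul_mem' := by
        rintro c x ⟨F, hF, hx⟩
        exact ⟨F, hF, Submodule.smul_mem _ c hx⟩ } with hJ
  have hrad : J.IsRadical := by
    rintro x ⟨n, F, hF, hn⟩
    exact ⟨F, hF, radDiffGen_isRadical δ _ ⟨n, hn⟩⟩
  have hdiff : IsDiffIdeal (fun i => ⇑(δ i)) J := by
    rintro i x ⟨F, hF, hx⟩
    exact ⟨F, hF, radDiffGen_isDiff δ _ i x hx⟩
  have hBJ : B ⊆ ↑J := by
    intro x hx
    exact ⟨{x}, by simpa using hx, subset_radDiffGen δ _ (by simp)⟩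
  exact radDiffGen_le δ hBJ hrad hdiff h

end Aux

/-- Every global section `η` of the residue-field sheaf `O'` admits `a i, b i ∈ A` with
`b i · η = ι'(a i)` and with the smallest radical differential ideal containing the `b i`
equal to all of `A`. -/
theorem stmt10 {A : Type*} [CommRing A] {k : ℕ} (δ : Fin k → Derivation ℤ A A)
    (hcomm : ∀ i j a, δ i (δ j a) = δ j (δ i a))
    (η : ∀ p : DiffSpec (fun i => ⇑(δ i)), FractionRing (A ⧸ p.1.asIdeal))
    (hreg : RegularRes η) :
    ∃ (m : ℕ) (a b : Fin m → A),
      (∀ i : Fin m, ∀ p : DiffSpec (fun i => ⇑(δ i)), resMap p (b i) * η p = resMap p (a i)) ∧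
      radDiffGen (fun i => ⇑(δ i)) (Set.range b) = ⊤ := by
  classical
  -- Step A: for each point, find a *globally valid* pair (a, b) with b outside p.
  have hpt : ∀ p : DiffSpec (fun i => ⇑(δ i)), ∃ a b : A, b ∉ p.1.asIdeal ∧
      ∀ q : DiffSpec (fun i => ⇑(δ i)), resMap q b * η q = resMap q a := by
    intro p
    obtain ⟨U, hU, hpU, a, b, hb, heq⟩ := hreg p
    obtain ⟨V, hV, hVU⟩ := isOpen_induced_iff.1 hU
    have hpV : p.1 ∈ V := by rw [← hVU] at hpU; exact hpU
    obtain ⟨W, ⟨g, rfl⟩, hgmem, hgsub⟩ :=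
      PrimeSpectrum.isTopologicalBasis_basic_opens.exists_subset_of_mem_open hpV hV
    refine ⟨g * a, g * b, ?_, ?_⟩
    · intro hmem
      rcases p.1.isPrime.mem_or_mem hmem with h | h
      · exact (PrimeSpectrum.mem_basicOpen g p.1).1 hgmem h
      · exact hb p hpU h
    · intro q
      by_cases hgq : g ∈ q.1.asIdeal
      · have h0 : resMap q g = 0 := by
          simp [resMap, Ideal.Quotient.eq_zero_iff_mem.mpr hgq]
        rw [map_mul, map_mul, h0, zero_mul, zero_mul, zero_mul]
      · have hqU : q ∈ U := by
          rw [← hVU]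
          exact hgsub ((PrimeSpectrum.mem_basicOpen g q.1).2 hgq)
        have h1 := heq q hqU
        rw [map_mul, map_mul]
        calc resMap q g * resMap q b * η q
            = resMap q g * (η q * resMap q b) := by ring
          _ = resMap q g * resMap q a := by rw [h1]
  choose aF bF hbF hglob using hpt
  -- Step B: no prime differential ideal contains all the bF's, hence 1 ∈ radDiffGen.
  have h1 : (1 : A) ∈ radDiffGen (fun i => ⇑(δ i)) (Set.range bF) := by
    by_contra h1
    obtain ⟨P, hP, hPdiff, hle⟩ := exists_prime_diff δ
      (radDiffGen_isRadical δ (Set.range bF)) (radDiffGen_isDiff δ (Set.range bF)) h1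
    set p : DiffSpec (fun i => ⇑(δ i)) := ⟨⟨P, hP⟩, hPdiff⟩ with hp
    exact hbF p (hle (subset_radDiffGen δ (Set.range bF) ⟨p, rfl⟩))
  -- Step C: reduce to a finite set.
  obtain ⟨F, hFsub, hF1⟩ := radDiffGen_finitary δ h1
  set L : List A := F.toList with hL
  have hmem : ∀ i : Fin L.length, ∃ p : DiffSpec (fun i => ⇑(δ i)), bF p = L.get i := by
    intro i
    exact hFsub (Finset.mem_coe.2 (Finset.mem_toList.1 (L.get_mem i)))
  choose pf hpf using hmem
  refine ⟨L.length, fun i => aF (pf i), fun i => bF (pf i), fun i p => hglob (pf i) p, ?_⟩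
  rw [Ideal.eq_top_iff_one]
  have hsubs : (↑F : Set A) ⊆ Set.range (fun i => bF (pf i)) := by
    intro x hx
    obtain ⟨i, hi⟩ : ∃ i : Fin L.length, L.get i = x :=
      List.mem_iff_get.1 (Finset.mem_toList.2 hx)
    exact ⟨i, by show bF (pf i) = x; rw [hpf i, hi]⟩
  exact radDiffGen_mono δ hsubs hF1
end

section
/- Let A be a Keigher differential ring, X = Spec^Δ A, and D a differential subring of the global sections O(X) containing the image of the canonical map ι : A → O(X). Then the contraction map ι* : Spec^Δ D → Spec^Δ A is a homeomorphism. -/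
section RDG

variable {A : Type*} [CommRing A] {k : ℕ} {d : Fin k → A → A}

theorem le_rdg (E : Set A) : E ⊆ ↑(radDiffGen d E) := fun _ hx =>
  Submodule.mem_sInf.2 fun _ hI => hI.1 hx

theorem rdg_le {E : Set A} {I : Ideal A} (hE : E ⊆ I) (hr : I.IsRadical)
    (hd : IsDiffIdeal d I) : radDiffGen d E ≤ I := sInf_le ⟨hE, hr, hd⟩

theorem rdg_radical (E : Set A) : (radDiffGen d E).IsRadical := by
  rintro x ⟨n, hn⟩
  exact Submodule.mem_sInf.2 fun I hI => hI.2.1 ⟨n, Submodule.mem_sInf.1 hn I hI⟩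

theorem rdg_diff (E : Set A) : IsDiffIdeal d (radDiffGen d E) := fun i x hx =>
  Submodule.mem_sInf.2 fun I hI => hI.2.2 i x (Submodule.mem_sInf.1 hx I hI)

theorem rdg_mono {E F : Set A} (h : E ⊆ F) : radDiffGen d E ≤ radDiffGen d F :=
  rdg_le (h.trans (le_rdg F)) (rdg_radical F) (rdg_diff F)

variable (hL : ∀ i (a b : A), d i (a * b) = a * d i b + d i a * b)

include hL in
/-- In a radical differential ideal, `a*b ∈ I` implies `a * d b ∈ I`. -/
theorem diff_mul_mem {I : Ideal A} (hr : I.IsRadical) (hd : IsDiffIdeal d I)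
    {a b : A} (h : a * b ∈ I) (i : Fin k) : a * d i b ∈ I := by
  have h1 : a * d i b + d i a * b ∈ I := hL i a b ▸ hd i _ h
  have h2 : (a * d i b) * (a * d i b) ∈ I := by
    have he : (a * d i b) * (a * d i b) =
        (a * d i b) * (a * d i b + d i a * b) - (a * b) * (d i a * d i b) := by ring
    rw [he]
    exact Ideal.sub_mem _ (Ideal.mul_mem_left _ _ h1) (Ideal.mul_mem_right _ _ h)
  exact hr ⟨2, by rwa [pow_two]⟩

include hL in
theorem rdg_mul_single {T : Set A} {a b : A} (hb : b ∈ radDiffGen d T) :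
    a * b ∈ radDiffGen d ((a * ·) '' T) := by
  set J := radDiffGen d ((a * ·) '' T) with hJ
  let C : Ideal A :=
    { carrier := {x | a * x ∈ J}
      add_mem' := fun hx hy => by
        simpa [mul_add] using Ideal.add_mem J hx hy
      zero_mem' := by simp
      smul_mem' := fun c x hx => by
        have : a * (c * x) = c * (a * x) := by ring
        simpa [smul_eq_mul, this] using Ideal.mul_mem_left J c hx }
  have hCmem : ∀ x : A, x ∈ C ↔ a * x ∈ J := fun x => Iff.rfl
  have hCrad : C.IsRadical := by
    rintro x ⟨n, hn⟩
    rw [hCmem] at hn ⊢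
    rcases Nat.eq_zero_or_pos n with h0 | hpos
    · subst h0; simp only [pow_zero, mul_one] at hn
      exact Ideal.mul_mem_right _ _ hn
    · apply rdg_radical
      refine ⟨n, ?_⟩
      have : (a * x) ^ n = a ^ (n - 1) * (a * x ^ n) := by
        rw [mul_pow]
        conv_lhs => rw [show a ^ n = a ^ (n-1) * a by rw [← pow_succ, Nat.sub_add_cancel hpos]]
        ring
      rw [this]
      exact Ideal.mul_mem_left _ _ hn
  have hCdiff : IsDiffIdeal d C := by
    intro i x hx
    rw [hCmem] at hx ⊢
    exact diff_mul_mem hL (rdg_radical _) (rdg_diff _) hx i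
  have hTC : T ⊆ ↑C := fun t ht => (hCmem t).2 (le_rdg _ ⟨t, ht, rfl⟩)
  exact (hCmem b).1 (rdg_le hTC hCrad hCdiff hb)

include hL in
theorem rdg_mul {S T : Set A} {x y : A} (hx : x ∈ radDiffGen d S) (hy : y ∈ radDiffGen d T) :
    x * y ∈ radDiffGen d (Set.image2 (· * ·) S T) := by
  have h1 : x * y ∈ radDiffGen d ((x * ·) '' T) := rdg_mul_single hL hy
  refine rdg_le ?_ (rdg_radical _) (rdg_diff _) h1
  rintro _ ⟨t, ht, rfl⟩
  have h2 : t * x ∈ radDiffGen d ((t * ·) '' S) := rdg_mul_single hL hx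
  have h3 : radDiffGen d ((t * ·) '' S) ≤ radDiffGen d (Set.image2 (· * ·) S T) := by
    refine rdg_mono ?_
    rintro _ ⟨s, hs, rfl⟩
    exact ⟨s, hs, t, ht, mul_comm s t⟩
  show x * t ∈ _
  rw [mul_comm]
  exact h3 h2

include hL in
set_option maxHeartbeats 2000000 in
theorem rdg_prime_avoid {E : Set A} {a : A} (ha : a ∉ radDiffGen d E) :
    ∃ P : Ideal A, P.IsPrime ∧ IsDiffIdeal d P ∧ E ⊆ P ∧ a ∉ P := by
  classical
  set S : Set (Ideal A) :=
    {I | E ⊆ I ∧ I.IsRadical ∧ IsDiffIdeal d I ∧ ∀ n : ℕ, a ^ (n + 1) ∉ I} with hS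
  have h0 : radDiffGen d E ∈ S := by
    rw [hS]
    exact ⟨le_rdg E, rdg_radical E, rdg_diff E, fun n hn => ha (rdg_radical E ⟨n + 1, hn⟩)⟩
  have hub : ∀ c ⊆ S, IsChain (· ≤ ·) c → ∀ y ∈ c, ∃ ub ∈ S, ∀ z ∈ c, z ≤ ub := by
    intro c hcS hchain y hy
    refine ⟨sSup c, ?_, fun z hz => le_sSup hz⟩
    have hne : c.Nonempty := ⟨y, hy⟩
    have hdir : DirectedOn (· ≤ ·) c := hchain.directedOn
    have hmem : ∀ z : A, z ∈ sSup c ↔ ∃ I ∈ c, z ∈ I := fun z =>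
      Submodule.mem_sSup_of_directed hne hdir
    have hcS' : ∀ {I}, I ∈ c → E ⊆ ↑I ∧ I.IsRadical ∧ IsDiffIdeal d I ∧ ∀ n : ℕ, a ^ (n + 1) ∉ I := by
      intro I hI; have := hcS hI; rwa [hS] at this
    rw [hS]
    refine ⟨fun e he => (hmem e).2 ⟨y, hy, (hcS' hy).1 he⟩, ?_, ?_, ?_⟩
    · rintro z ⟨n, hn⟩
      obtain ⟨I, hI, hzI⟩ := (hmem _).1 hn
      exact (hmem z).2 ⟨I, hI, (hcS' hI).2.1 ⟨n, hzI⟩⟩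
    · intro i z hz
      obtain ⟨I, hI, hzI⟩ := (hmem z).1 hz
      exact (hmem _).2 ⟨I, hI, (hcS' hI).2.2.1 i z hzI⟩
    · intro n hn
      obtain ⟨I, hI, hzI⟩ := (hmem _).1 hn
      exact (hcS' hI).2.2.2 n hzI
  obtain ⟨M, -, hMmax⟩ := zorn_le_nonempty₀ S hub _ h0
  have hMS := hMmax.prop
  rw [hS] at hMS
  obtain ⟨hEM, hMrad, hMdiff, hMa⟩ := hMS
  refine ⟨M, ?_, hMdiff, hEM, fun haM => hMa 0 (by simpa using haM)⟩
  constructor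
  · intro htop
    exact hMa 0 (by rw [htop]; trivial)
  · intro x y hxy
    by_contra hcon
    push_neg at hcon
    obtain ⟨hxM, hyM⟩ := hcon
    have hJ : ∀ z : A, z ∉ M → ∃ n : ℕ, a ^ (n + 1) ∈ radDiffGen d (↑M ∪ {z}) := by
      intro z hz
      by_contra hno
      push_neg at hno
      have hzS : radDiffGen d (↑M ∪ {z}) ∈ S := by
        rw [hS]
        refine ⟨(hEM.trans ?_).trans (le_rdg _), rdg_radical _, rdg_diff _, hno⟩
        exact Set.subset_union_left
      have hle : M ≤ radDiffGen d (↑M ∪ {z}) := fun w hw => le_rdg _ (Or.inl hw)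
      have := hMmax.2 hzS hle
      exact hz (this (le_rdg _ (Or.inr rfl)))
    obtain ⟨n, hn⟩ := hJ x hxM
    obtain ⟨m, hm⟩ := hJ y hyM
    have hprod : a ^ (n + 1) * a ^ (m + 1) ∈
        radDiffGen d (Set.image2 (· * ·) (↑M ∪ {x}) (↑M ∪ {y})) := rdg_mul hL hn hm
    have hsub : Set.image2 (· * ·) ((↑M : Set A) ∪ {x}) ((↑M : Set A) ∪ {y}) ⊆ ↑M := by
      rintro _ ⟨u, hu, v, hv, rfl⟩
      rcases hu with hu | hu
      · exact Ideal.mul_mem_right _ _ hu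
      · rcases hv with hv | hv
        · exact Ideal.mul_mem_left _ _ hv
        · simp only [Set.mem_singleton_iff] at hu hv
          subst hu; subst hv; exact hxy
    have : a ^ (n + 1) * a ^ (m + 1) ∈ M :=
      rdg_le hsub hMrad hMdiff hprod
    rw [← pow_add] at this
    exact hMa (n + 1 + m + 1 - 1) (by
      have : n + 1 + (m + 1) = (n + 1 + m + 1 - 1) + 1 := by omega
      rwa [this] at *)

theorem rdg_finitary {E : Set A} {x : A} (hx : x ∈ radDiffGen d E) :
    ∃ F : Finset A, ↑F ⊆ E ∧ x ∈ radDiffGen d ↑F := by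
  classical
  let U : Ideal A :=
    { carrier := {y | ∃ F : Finset A, ↑F ⊆ E ∧ y ∈ radDiffGen d ↑F}
      add_mem' := by
        rintro y z ⟨F1, hF1, hy⟩ ⟨F2, hF2, hz⟩
        refine ⟨F1 ∪ F2, by simp [Finset.coe_union, Set.union_subset hF1 hF2], ?_⟩
        have h1 : radDiffGen d ↑F1 ≤ radDiffGen d ↑(F1 ∪ F2) :=
          rdg_mono (by simp [Finset.coe_union])
        have h2 : radDiffGen d ↑F2 ≤ radDiffGen d ↑(F1 ∪ F2) :=
          rdg_mono (by simp [Finset.coe_union])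
        exact Ideal.add_mem _ (h1 hy) (h2 hz)
      zero_mem' := ⟨∅, by simp, by simp⟩
      smul_mem' := by
        rintro c y ⟨F, hF, hy⟩
        exact ⟨F, hF, by simpa [smul_eq_mul] using Ideal.mul_mem_left _ c hy⟩ }
  have hUmem : ∀ y : A, y ∈ U ↔ ∃ F : Finset A, ↑F ⊆ E ∧ y ∈ radDiffGen d ↑F := fun y => Iff.rfl
  have hUrad : U.IsRadical := by
    rintro y ⟨n, hn⟩
    obtain ⟨F, hF, hy⟩ := (hUmem _).1 hn
    exact (hUmem y).2 ⟨F, hF, rdg_radical _ ⟨n, hy⟩⟩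
  have hUdiff : IsDiffIdeal d U := by
    intro i y hy
    obtain ⟨F, hF, hy⟩ := (hUmem y).1 hy
    exact (hUmem _).2 ⟨F, hF, rdg_diff _ i y hy⟩
  have hEU : E ⊆ ↑U := fun y hy =>
    (hUmem y).2 ⟨{y}, by simpa using hy, le_rdg _ (by simp)⟩
  exact (hUmem x).1 (rdg_le hEU hUrad hUdiff hx)

end RDG

/-- A function `X → ⊔_p A_p` is regular if it is locally a quotient `a/b` with `b`
outside every prime differential ideal of the neighborhood. -/
def RegularLoc {A : Type*} [CommRing A] {k : ℕ} {d : Fin k → A → A}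
    (f : ∀ p : DiffSpec d, Localization.AtPrime p.1.asIdeal) : Prop :=
  ∀ p : DiffSpec d, ∃ U : Set (DiffSpec d), IsOpen U ∧ p ∈ U ∧ ∃ a b : A,
    (∀ q ∈ U, b ∉ q.1.asIdeal) ∧
    ∀ q ∈ U, f q * algebraMap A (Localization.AtPrime q.1.asIdeal) b
      = algebraMap A (Localization.AtPrime q.1.asIdeal) a

set_option maxHeartbeats 1000000

/-- For a Keigher ring `A` and any differential subring `D` of `O(X)` containing the image
of the canonical map `ι : A → O(X)`, the contraction map `Spec^Δ D → Spec^Δ A` is a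
homeomorphism. -/
theorem stmt15 {A : Type*} [CommRing A] {k : ℕ} (δ : Fin k → Derivation ℤ A A)
    (hcomm : ∀ i j a, δ i (δ j a) = δ j (δ i a))
    (hK : IsKeigher (fun i => ⇑(δ i)))
    (δL : ∀ p : DiffSpec (fun i => ⇑(δ i)),
      Fin k → Derivation ℤ (Localization.AtPrime p.1.asIdeal) (Localization.AtPrime p.1.asIdeal))
    (hδL : ∀ (p : DiffSpec (fun i => ⇑(δ i))) (i : Fin k) (a : A),
      δL p i (algebraMap A (Localization.AtPrime p.1.asIdeal) a)
        = algebraMap A (Localization.AtPrime p.1.asIdeal) (δ i a))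
    (D : Subring (∀ p : DiffSpec (fun i => ⇑(δ i)), Localization.AtPrime p.1.asIdeal))
    (hreg : ∀ f ∈ D, RegularLoc f)
    (himg : ∀ a : A,
      (fun p : DiffSpec (fun i => ⇑(δ i)) => algebraMap A (Localization.AtPrime p.1.asIdeal) a) ∈ D)
    (hclosed : ∀ f ∈ D, ∀ i, (fun p => δL p i (f p)) ∈ D)
    (dD : Fin k → D → D)
    (hdD : ∀ i (x : D) (p : DiffSpec (fun i => ⇑(δ i))),
      ((dD i x : D) : ∀ p, Localization.AtPrime p.1.asIdeal) p
        = δL p i (((x : D) : ∀ p, Localization.AtPrime p.1.asIdeal) p)) :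
    ∃ h : DiffSpec dD ≃ₜ DiffSpec (fun i => ⇑(δ i)),
      ∀ q, (h q).1.asIdeal = Ideal.comap
        (RingHom.codRestrict
          (Pi.ringHom fun p : DiffSpec (fun i => ⇑(δ i)) =>
            algebraMap A (Localization.AtPrime p.1.asIdeal)) D himg) q.1.asIdeal := by
  classical
  have hL : ∀ (i : Fin k) (a b : A), δ i (a * b) = a * δ i b + δ i a * b := by
    intro i a b
    rw [Derivation.leibniz]
    simp only [smul_eq_mul]
    ring
  set ι : A →+* ↥D := RingHom.codRestrict
    (Pi.ringHom fun p : DiffSpec (fun i => ⇑(δ i)) =>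
      algebraMap A (Localization.AtPrime p.1.asIdeal)) D himg with hιdef
  -- shrink regularity neighborhoods to basic opens
  have basic : ∀ f : (∀ p : DiffSpec (fun i => ⇑(δ i)), Localization.AtPrime p.1.asIdeal),
      RegularLoc f → ∀ p : DiffSpec (fun i => ⇑(δ i)),
      ∃ c a b : A, c ∉ p.1.asIdeal ∧
        ∀ q : DiffSpec (fun i => ⇑(δ i)), c ∉ q.1.asIdeal →
          b ∉ q.1.asIdeal ∧
          f q * algebraMap A (Localization.AtPrime q.1.asIdeal) b
            = algebraMap A (Localization.AtPrime q.1.asIdeal) a := by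
    intro f hf p
    obtain ⟨U, hUopen, hpU, a, b, hb, hab⟩ := hf p
    obtain ⟨V, hV, hVU⟩ := isOpen_induced_iff.1 hUopen
    obtain ⟨W, ⟨c, rfl⟩, hpc, hcV⟩ :=
      PrimeSpectrum.isTopologicalBasis_basic_opens.isOpen_iff.1 hV p.1
        (by rw [← hVU] at hpU; exact hpU)
    refine ⟨c, a, b, (PrimeSpectrum.mem_basicOpen c p.1).1 hpc, ?_⟩
    intro q hq
    have hqU : q ∈ U := by
      rw [← hVU]
      exact hcV ((PrimeSpectrum.mem_basicOpen c q.1).2 hq)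
    exact ⟨hb q hqU, hab q hqU⟩
  -- the localized derivations preserve the maximal ideal at differential primes
  have hδLm : ∀ (p : DiffSpec (fun i => ⇑(δ i))) (i : Fin k)
      (z : Localization.AtPrime p.1.asIdeal),
      z ∈ IsLocalRing.maximalIdeal _ → δL p i z ∈ IsLocalRing.maximalIdeal _ := by
    intro p i z hz
    obtain ⟨⟨a, s⟩, rfl⟩ := IsLocalization.mk'_surjective p.1.asIdeal.primeCompl z
    have ha : a ∈ p.1.asIdeal :=
      (IsLocalization.AtPrime.mk'_mem_maximal_iff _ p.1.asIdeal a s).1 hz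
    have hspec : IsLocalization.mk' (Localization.AtPrime p.1.asIdeal) a s *
        algebraMap A _ (s : A) = algebraMap A _ a := IsLocalization.mk'_spec _ a s
    have h2 := congrArg (δL p i) hspec
    rw [Derivation.leibniz, hδL, hδL] at h2
    have h3 : algebraMap A (Localization.AtPrime p.1.asIdeal) (s : A) *
        δL p i (IsLocalization.mk' _ a s)
        = algebraMap A _ (δ i a) -
          IsLocalization.mk' _ a s * algebraMap A _ (δ i (s : A)) := by
      rw [smul_eq_mul, smul_eq_mul] at h2
      linear_combination h2
    have h4 : algebraMap A (Localization.AtPrime p.1.asIdeal) (s : A) *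
        δL p i (IsLocalization.mk' _ a s) ∈ IsLocalRing.maximalIdeal _ := by
      rw [h3]
      refine Ideal.sub_mem _ ?_ (Ideal.mul_mem_right _ _ hz)
      exact (IsLocalization.AtPrime.to_map_mem_maximal_iff _ p.1.asIdeal _).2 (p.2 i a ha)
    obtain ⟨u, hu⟩ := IsLocalization.map_units (Localization.AtPrime p.1.asIdeal) s
    have h5 : δL p i (IsLocalization.mk' _ a s) =
        ↑u⁻¹ * (algebraMap A (Localization.AtPrime p.1.asIdeal) (s : A) *
          δL p i (IsLocalization.mk' _ a s)) := by
      rw [← hu, ← mul_assoc, Units.inv_mul, one_mul]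
    rw [h5]
    exact Ideal.mul_mem_left _ _ h4
  -- the kernel ideal K
  let K : Ideal A :=
    { carrier := {x | ∀ p : DiffSpec (fun i => ⇑(δ i)),
        algebraMap A (Localization.AtPrime p.1.asIdeal) x = 0}
      add_mem' := fun hx hy => by
        intro p; rw [map_add, hx p, hy p, add_zero]
      zero_mem' := fun p => map_zero _
      smul_mem' := fun c x hx => by
        intro p; rw [smul_eq_mul, map_mul, hx p, mul_zero] }
  have hKmem : ∀ x : A, x ∈ K ↔ ∀ p : DiffSpec (fun i => ⇑(δ i)),
      algebraMap A (Localization.AtPrime p.1.asIdeal) x = 0 := fun x => Iff.rfl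
  have hKdiff : IsDiffIdeal (fun i => ⇑(δ i)) K := by
    intro i x hx
    intro p
    have h1 : algebraMap A (Localization.AtPrime p.1.asIdeal) (δ i x)
        = δL p i (algebraMap A (Localization.AtPrime p.1.asIdeal) x) := (hδL p i x).symm
    rw [h1, hx p, map_zero]
  have hKrad_diff : IsDiffIdeal (fun i => ⇑(δ i)) K.radical := hK K hKdiff
  -- the key annihilation lemma
  have key : ∀ c e : A,
      (∀ P : Ideal A, P.IsPrime → IsDiffIdeal (fun i => ⇑(δ i)) P →
        ({s : A | s * e = 0} ⊆ ↑P) → c ∈ P) →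
      c * e ∈ K.radical := by
    intro c e hall
    have hc : c ∈ radDiffGen (fun i => ⇑(δ i)) {s : A | s * e = 0} := by
      by_contra hcr
      obtain ⟨P, hP, hPd, hEP, hcP⟩ := rdg_prime_avoid hL hcr
      exact hcP (hall P hP hPd hEP)
    let T : Ideal A :=
      { carrier := {y | y * e ∈ K.radical}
        add_mem' := fun hx hy => by
          simp only [Set.mem_setOf_eq, add_mul] at *
          exact Ideal.add_mem _ hx hy
        zero_mem' := by
          simp only [Set.mem_setOf_eq, zero_mul]
          exact Ideal.zero_mem _
        smul_mem' := fun cc y hy => by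
          simp only [Set.mem_setOf_eq, smul_eq_mul, mul_assoc] at *
          exact Ideal.mul_mem_left _ _ hy }
    have hTmem : ∀ y : A, y ∈ T ↔ y * e ∈ K.radical := fun y => Iff.rfl
    have hTrad : T.IsRadical := by
      rintro y ⟨n, hn⟩
      rw [hTmem] at hn ⊢
      rcases Nat.eq_zero_or_pos n with h0 | hpos
      · subst h0
        simp only [pow_zero, one_mul] at hn
        exact Ideal.mul_mem_left _ _ hn
      · apply Ideal.radical_isRadical K
        refine ⟨n, ?_⟩
        have h1 : (y * e) ^ n = (y ^ n * e) * e ^ (n - 1) := by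
          rw [mul_pow]
          conv_lhs => rw [show e ^ n = e ^ (n - 1) * e by
            rw [← pow_succ, Nat.sub_add_cancel hpos]]
          ring
        rw [h1]
        exact Ideal.mul_mem_right _ _ hn
    have hTdiff : IsDiffIdeal (fun i => ⇑(δ i)) T := by
      intro i y hy
      rw [hTmem] at hy ⊢
      have h1 : e * y ∈ K.radical := by rwa [mul_comm]
      have h2 := diff_mul_mem hL (Ideal.radical_isRadical K) hKrad_diff h1 i
      rwa [mul_comm]
    have hsubT : {s : A | s * e = 0} ⊆ ↑T := fun s hs => by
      rw [SetLike.mem_coe, hTmem, hs]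
      exact Ideal.zero_mem _
    exact (hTmem c).1 (rdg_le hsubT hTrad hTdiff hc)
  -- Ψ : DiffSpec dD → DiffSpec δ
  have hΨdiff : ∀ q : DiffSpec dD,
      IsDiffIdeal (fun i => ⇑(δ i)) (Ideal.comap ι q.1.asIdeal) := by
    intro q i a ha
    have h1 : dD i (ι a) = ι (δ i a) := by
      apply Subtype.ext
      funext p
      rw [hdD]
      exact hδL p i a
    have h3 := q.2 i (ι a) ha
    rw [h1] at h3
    exact h3
  let Ψ : DiffSpec dD → DiffSpec (fun i => ⇑(δ i)) :=
    fun q => ⟨PrimeSpectrum.comap ι q.1, hΨdiff q⟩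
  -- evaluation maps and Φ
  let ev : ∀ p : DiffSpec (fun i => ⇑(δ i)), ↥D →+* Localization.AtPrime p.1.asIdeal :=
    fun p => (Pi.evalRingHom (fun p' : DiffSpec (fun i => ⇑(δ i)) =>
      Localization.AtPrime p'.1.asIdeal) p).comp D.subtype
  have hΦprime : ∀ p : DiffSpec (fun i => ⇑(δ i)),
      (Ideal.comap (ev p) (IsLocalRing.maximalIdeal
        (Localization.AtPrime p.1.asIdeal))).IsPrime := by
    intro p
    haveI : (IsLocalRing.maximalIdeal (Localization.AtPrime p.1.asIdeal)).IsPrime :=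
      (IsLocalRing.maximalIdeal.isMaximal _).isPrime
    exact Ideal.IsPrime.comap _
  have hΦdiff : ∀ p : DiffSpec (fun i => ⇑(δ i)),
      IsDiffIdeal dD (Ideal.comap (ev p) (IsLocalRing.maximalIdeal
        (Localization.AtPrime p.1.asIdeal))) := by
    intro p i x hx
    rw [Ideal.mem_comap] at hx ⊢
    have h1 : ev p (dD i x) = δL p i (ev p x) := hdD i x p
    rw [h1]
    exact hδLm p i _ hx
  let Φ : DiffSpec (fun i => ⇑(δ i)) → DiffSpec dD :=
    fun p => ⟨⟨Ideal.comap (ev p) (IsLocalRing.maximalIdeal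
      (Localization.AtPrime p.1.asIdeal)), hΦprime p⟩, hΦdiff p⟩
  -- the main lemma
  have main : ∀ (q : DiffSpec dD) (f : ↥D),
      f ∈ q.1.asIdeal ↔
      ((f : ↥D) : ∀ p : DiffSpec (fun i => ⇑(δ i)), Localization.AtPrime p.1.asIdeal) (Ψ q)
        ∈ IsLocalRing.maximalIdeal (Localization.AtPrime (Ψ q).1.asIdeal) := by
    intro q f
    set p : DiffSpec (fun i => ⇑(δ i)) := Ψ q with hpdef
    have hmemp : ∀ a : A, a ∈ p.1.asIdeal ↔ ι a ∈ q.1.asIdeal := fun a => Iff.rfl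
    choose cc aa bb hcc hprop using basic (↑f) (hreg (↑f) f.2)
    have hone : (1 : A) ∈ radDiffGen (fun i => ⇑(δ i)) (Set.range cc) := by
      by_contra h1
      obtain ⟨P, hP, hPd, hEP, -⟩ := rdg_prime_avoid hL h1
      exact hcc ⟨⟨P, hP⟩, hPd⟩ (hEP ⟨⟨⟨P, hP⟩, hPd⟩, rfl⟩)
    obtain ⟨F, hFsub, h1F⟩ := rdg_finitary hone
    have hpts : ∀ x ∈ F, ∃ t, cc t = x := fun x hx => hFsub hx
    choose pt hpt using hpts
    let dd : {y : A // y ∈ F} → A :=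
      fun x => aa (pt x.1 x.2) * bb p - aa p * bb (pt x.1 x.2)
    have hKmemN : ∀ x : {y : A // y ∈ F}, (cc p * x.1) * dd x ∈ K.radical := by
      intro x
      apply key
      intro P hP hPd hann
      by_contra hcP
      have hcp : cc p ∉ P := fun h => hcP (Ideal.mul_mem_right _ _ h)
      have hx1 : x.1 ∉ P := fun h => hcP (Ideal.mul_mem_left _ _ h)
      set t' : DiffSpec (fun i => ⇑(δ i)) := ⟨⟨P, hP⟩, hPd⟩ with ht'def
      have h1 := hprop (pt x.1 x.2) t' (by rw [hpt x.1 x.2]; exact hx1)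
      have h2 := hprop p t' hcp
      have h3 : algebraMap A (Localization.AtPrime t'.1.asIdeal) (dd x) = 0 := by
        rw [show dd x = aa (pt x.1 x.2) * bb p - aa p * bb (pt x.1 x.2) from rfl]
        rw [map_sub, map_mul, map_mul, ← h1.2, ← h2.2]
        ring
      obtain ⟨m, hm⟩ := (IsLocalization.map_eq_zero_iff t'.1.asIdeal.primeCompl
        (Localization.AtPrime t'.1.asIdeal) (dd x)).1 h3
      exact m.2 (hann hm)
    have hKmemN' : ∀ x : {y : A // y ∈ F}, ∃ n : ℕ, ((cc p * x.1) * dd x) ^ n ∈ K :=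
      fun x => hKmemN x
    choose NN hNN using hKmemN'
    set N : ℕ := (Finset.univ.sup NN) + 1 with hNdef
    have hN1 : 1 ≤ N := Nat.succ_le_succ (Nat.zero_le _)
    have hKN : ∀ x : {y : A // y ∈ F}, ((cc p * x.1) * dd x) ^ N ∈ K := by
      intro x
      have hle : NN x ≤ N := le_trans (Finset.le_sup (Finset.mem_univ x)) (Nat.le_succ _)
      rw [show N = NN x + (N - NN x) by omega, pow_add]
      exact Ideal.mul_mem_right _ _ (hNN x)
    set H : ↥D := f * ι (bb p) - ι (aa p) with hHdef
    set g : ↥D := ι (cc p) * H with hgdef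
    have hcover : ∀ t : DiffSpec (fun i => ⇑(δ i)), ∃ x : {y : A // y ∈ F},
        x.1 ∉ t.1.asIdeal := by
      intro t
      by_contra hno
      push_neg at hno
      have hsub : (↑F : Set A) ⊆ ↑t.1.asIdeal := fun y hy => hno ⟨y, hy⟩
      have h1 := rdg_le hsub (t.1.isPrime.isRadical) t.2 h1F
      exact t.1.isPrime.ne_top ((Ideal.eq_top_iff_one _).2 h1)
    have hgN : g ^ N = 0 := by
      apply Subtype.ext
      funext t
      obtain ⟨x, hxt⟩ := hcover t
      have hcx : cc (pt x.1 x.2) ∉ t.1.asIdeal := by rw [hpt]; exact hxt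
      obtain ⟨hbt, hft⟩ := hprop (pt x.1 x.2) t hcx
      have hgt : ((g : ↥D) : ∀ p : DiffSpec (fun i => ⇑(δ i)),
          Localization.AtPrime p.1.asIdeal) t
          = algebraMap A _ (cc p) * (((f : ↥D) : ∀ p : DiffSpec (fun i => ⇑(δ i)),
            Localization.AtPrime p.1.asIdeal) t * algebraMap A _ (bb p)
            - algebraMap A _ (aa p)) := rfl
      have hu : IsUnit (algebraMap A (Localization.AtPrime t.1.asIdeal)
          (bb (pt x.1 x.2) * x.1)) := by
        refine IsLocalization.map_units (Localization.AtPrime t.1.asIdeal)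
          (⟨bb (pt x.1 x.2) * x.1, ?_⟩ : t.1.asIdeal.primeCompl)
        exact Submonoid.mul_mem _ hbt hxt
      have hstep : ((g : ↥D) : ∀ p : DiffSpec (fun i => ⇑(δ i)),
            Localization.AtPrime p.1.asIdeal) t
            * algebraMap A (Localization.AtPrime t.1.asIdeal) (bb (pt x.1 x.2) * x.1)
          = algebraMap A (Localization.AtPrime t.1.asIdeal) ((cc p * x.1) * dd x) := by
        rw [hgt, show dd x = aa (pt x.1 x.2) * bb p - aa p * bb (pt x.1 x.2) from rfl]
        simp only [map_mul, map_sub]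
        linear_combination (algebraMap A (Localization.AtPrime t.1.asIdeal) (cc p) *
          algebraMap A (Localization.AtPrime t.1.asIdeal) x.1 *
          algebraMap A (Localization.AtPrime t.1.asIdeal) (bb p)) * hft
      have hzero : (((g : ↥D) : ∀ p : DiffSpec (fun i => ⇑(δ i)),
            Localization.AtPrime p.1.asIdeal) t) ^ N *
          (algebraMap A (Localization.AtPrime t.1.asIdeal) (bb (pt x.1 x.2) * x.1)) ^ N
          = 0 := by
        rw [← mul_pow, hstep, ← map_pow]
        exact hKN x t
      have hNz : (((g : ↥D) : ∀ p : DiffSpec (fun i => ⇑(δ i)),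
          Localization.AtPrime p.1.asIdeal) t) ^ N = 0 :=
        ((hu.pow N).mul_left_eq_zero).1 hzero
      calc ((g ^ N : ↥D) : ∀ p : DiffSpec (fun i => ⇑(δ i)),
            Localization.AtPrime p.1.asIdeal) t
          = (((g : ↥D) : ∀ p : DiffSpec (fun i => ⇑(δ i)),
            Localization.AtPrime p.1.asIdeal) t) ^ N := by
            rw [SubmonoidClass.coe_pow]; rfl
        _ = 0 := hNz
    have hgq : g ∈ q.1.asIdeal :=
      q.1.isPrime.mem_of_pow_mem N (by rw [hgN]; exact (q.1.asIdeal).zero_mem)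
    have hccq : ι (cc p) ∉ q.1.asIdeal := fun hc => hcc p ((hmemp (cc p)).2 hc)
    have hHq : H ∈ q.1.asIdeal := by
      rcases q.1.isPrime.mem_or_mem hgq with h | h
      · exact absurd h hccq
      · exact h
    have hbbp : bb p ∉ p.1.asIdeal := (hprop p p (hcc p)).1
    have hfbb : ((f : ↥D) : ∀ p : DiffSpec (fun i => ⇑(δ i)),
        Localization.AtPrime p.1.asIdeal) p * algebraMap A _ (bb p)
        = algebraMap A _ (aa p) := (hprop p p (hcc p)).2
    have hbbq : ι (bb p) ∉ q.1.asIdeal := fun hb => hbbp ((hmemp _).2 hb)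
    constructor
    · intro hf
      have h1 : ι (aa p) ∈ q.1.asIdeal := by
        have he : ι (aa p) = f * ι (bb p) - H := by rw [hHdef]; ring
        rw [he]
        exact Ideal.sub_mem _ (Ideal.mul_mem_right _ _ hf) hHq
      have h2 : aa p ∈ p.1.asIdeal := (hmemp _).1 h1
      have h3 : ((f : ↥D) : ∀ p : DiffSpec (fun i => ⇑(δ i)),
          Localization.AtPrime p.1.asIdeal) p * algebraMap A _ (bb p)
          ∈ IsLocalRing.maximalIdeal (Localization.AtPrime p.1.asIdeal) := by
        rw [hfbb]
        exact (IsLocalization.AtPrime.to_map_mem_maximal_iff _ p.1.asIdeal _).2 h2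
      obtain ⟨u, hu⟩ := IsLocalization.map_units (Localization.AtPrime p.1.asIdeal)
        (⟨bb p, hbbp⟩ : p.1.asIdeal.primeCompl)
      have h4 : ((f : ↥D) : ∀ p : DiffSpec (fun i => ⇑(δ i)),
          Localization.AtPrime p.1.asIdeal) p
          = ((f : ↥D) : ∀ p : DiffSpec (fun i => ⇑(δ i)),
            Localization.AtPrime p.1.asIdeal) p * algebraMap A _ (bb p) * ↑u⁻¹ := by
        rw [← hu, mul_assoc, Units.mul_inv, mul_one]
      rw [h4]
      exact Ideal.mul_mem_right _ _ h3
    · intro hfm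
      have h3 : algebraMap A (Localization.AtPrime p.1.asIdeal) (aa p)
          ∈ IsLocalRing.maximalIdeal (Localization.AtPrime p.1.asIdeal) := by
        rw [← hfbb]
        exact Ideal.mul_mem_right _ _ hfm
      have h2 : aa p ∈ p.1.asIdeal :=
        (IsLocalization.AtPrime.to_map_mem_maximal_iff _ p.1.asIdeal _).1 h3
      have h1 : ι (aa p) ∈ q.1.asIdeal := (hmemp _).2 h2
      have h5 : f * ι (bb p) ∈ q.1.asIdeal := by
        have he : f * ι (bb p) = H + ι (aa p) := by rw [hHdef]; ring
        rw [he]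
        exact Ideal.add_mem _ hHq h1
      rcases q.1.isPrime.mem_or_mem h5 with h | h
      · exact h
      · exact absurd h hbbq
  -- mutual inverses
  have hΨΦ : ∀ p : DiffSpec (fun i => ⇑(δ i)), Ψ (Φ p) = p := by
    intro p
    apply Subtype.ext
    apply PrimeSpectrum.ext
    show Ideal.comap ι (Ideal.comap (ev p) (IsLocalRing.maximalIdeal
      (Localization.AtPrime p.1.asIdeal))) = p.1.asIdeal
    rw [Ideal.comap_comap, show (ev p).comp ι =
      algebraMap A (Localization.AtPrime p.1.asIdeal) from RingHom.ext fun a => rfl]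
    exact IsLocalization.AtPrime.comap_maximalIdeal _ _
  have hΦΨ : ∀ q : DiffSpec dD, Φ (Ψ q) = q := by
    intro q
    apply Subtype.ext
    apply PrimeSpectrum.ext
    apply Ideal.ext
    intro f
    show f ∈ Ideal.comap (ev (Ψ q)) (IsLocalRing.maximalIdeal
      (Localization.AtPrime (Ψ q).1.asIdeal)) ↔ f ∈ q.1.asIdeal
    rw [Ideal.mem_comap]
    exact (main q f).symm
  -- continuity
  have hΨcont : Continuous Ψ := by
    apply Continuous.subtype_mk
    exact (PrimeSpectrum.continuous_comap ι).comp continuous_subtype_val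
  have hunit_open : ∀ g : ↥D, IsOpen {t : DiffSpec (fun i => ⇑(δ i)) |
      IsUnit (((g : ↥D) : ∀ p : DiffSpec (fun i => ⇑(δ i)),
        Localization.AtPrime p.1.asIdeal) t)} := by
    intro g
    rw [isOpen_iff_forall_mem_open]
    intro t ht
    simp only [Set.mem_setOf_eq] at ht
    obtain ⟨c, a, b, hc, hdat⟩ := basic (↑g) (hreg (↑g) g.2) t
    have hbt : b ∉ t.1.asIdeal := (hdat t hc).1
    have hgb : ((g : ↥D) : ∀ p : DiffSpec (fun i => ⇑(δ i)),
        Localization.AtPrime p.1.asIdeal) t * algebraMap A _ b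
        = algebraMap A _ a := (hdat t hc).2
    have hau : IsUnit (algebraMap A (Localization.AtPrime t.1.asIdeal) a) := by
      rw [← hgb]
      exact ht.mul (IsLocalization.map_units _ (⟨b, hbt⟩ : t.1.asIdeal.primeCompl))
    have hat : a ∉ t.1.asIdeal := fun hmem =>
      ((IsLocalization.AtPrime.isUnit_to_map_iff
        (Localization.AtPrime t.1.asIdeal) t.1.asIdeal a).1 hau) hmem
    refine ⟨{s : DiffSpec (fun i => ⇑(δ i)) | c * a ∉ s.1.asIdeal}, ?_, ?_, ?_⟩
    · intro s hs
      simp only [Set.mem_setOf_eq] at hs ⊢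
      have hcs : c ∉ s.1.asIdeal := fun h => hs (Ideal.mul_mem_right _ _ h)
      have has : a ∉ s.1.asIdeal := fun h => hs (Ideal.mul_mem_left _ _ h)
      have h1 := (hdat s hcs).2
      have hau' : IsUnit (algebraMap A (Localization.AtPrime s.1.asIdeal) a) :=
        (IsLocalization.AtPrime.isUnit_to_map_iff _ s.1.asIdeal a).2 has
      rw [← h1] at hau'
      exact isUnit_of_mul_isUnit_left hau'
    · have he : {s : DiffSpec (fun i => ⇑(δ i)) | c * a ∉ s.1.asIdeal}
          = Subtype.val ⁻¹' (↑(PrimeSpectrum.basicOpen (c * a)) : Set (PrimeSpectrum A)) := by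
        ext s
        simp [PrimeSpectrum.mem_basicOpen]
      rw [he]
      exact (PrimeSpectrum.isOpen_basicOpen).preimage continuous_subtype_val
    · show c * a ∉ t.1.asIdeal
      intro h
      rcases t.1.isPrime.mem_or_mem h with h' | h'
      · exact hc h'
      · exact hat h'
  have hΦcont : Continuous Φ := by
    apply Continuous.subtype_mk
    rw [PrimeSpectrum.isTopologicalBasis_basic_opens.continuous_iff]
    rintro s ⟨g, rfl⟩
    have he : (fun p : DiffSpec (fun i => ⇑(δ i)) =>
        (⟨Ideal.comap (ev p) (IsLocalRing.maximalIdeal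
          (Localization.AtPrime p.1.asIdeal)), hΦprime p⟩ : PrimeSpectrum ↥D)) ⁻¹'
        (↑(PrimeSpectrum.basicOpen g) : Set (PrimeSpectrum ↥D))
        = {t : DiffSpec (fun i => ⇑(δ i)) |
            IsUnit (((g : ↥D) : ∀ p : DiffSpec (fun i => ⇑(δ i)),
              Localization.AtPrime p.1.asIdeal) t)} := by
      ext t
      simp only [Set.mem_preimage, SetLike.mem_coe, PrimeSpectrum.mem_basicOpen,
        Set.mem_setOf_eq, Ideal.mem_comap, IsLocalRing.mem_maximalIdeal, mem_nonunits_iff,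
        not_not]
      exact Iff.rfl
    rw [he]
    exact hunit_open g
  refine ⟨⟨⟨Ψ, Φ, hΦΨ, hΨΦ⟩, hΨcont, hΦcont⟩, fun q => rfl⟩
end
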